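/- Let m ≥ 2 be an integer and let n be an odd integer whose smallest prime divisor p satisfies p³ ≤ n. Then (1 + α(m))·(n!/2)^{m/2} ≤ (1/(2^{m−1}·n))·(((n/p)!)^p · p!)^m, as an inequality of real numbers. -/

import Mathlib

/-- `alpha m` = α(m): the number of distinct prime divisors of `m`. -/
def alpha (m : ℕ) : ℕ := m.primeFactors.card

private lemma bern (x : ℕ) : ∀ t, x ^ t * (x + t + 1) ≤ (x + 1) ^ (t + 1)
  | 0 => by simp
  | t + 1 => by
    have ih := bern x t
    calc x ^ (t+1) * (x + (t+1) + 1) = x ^ t * (x * (x + t + 2)) := by rw [pow_succ]; ring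
      _ ≤ x ^ t * ((x + t + 1) * (x + 1)) := Nat.mul_le_mul_left _ (by nlinarith)
      _ = (x ^ t * (x + t + 1)) * (x + 1) := by ring
      _ ≤ (x + 1) ^ (t+1) * (x + 1) := Nat.mul_le_mul_right _ ih
      _ = (x + 1) ^ (t + 1 + 1) := (pow_succ _ _).symm

private lemma fact_add_le (a : ℕ) : ∀ b, (a + b).factorial ≤ a.factorial * (a + b) ^ b
  | 0 => by simp
  | b + 1 => by
    calc (a + (b+1)).factorial = (a + b + 1) * (a + b).factorial := by
          rw [← Nat.add_assoc]; exact Nat.factorial_succ _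
      _ ≤ (a + b + 1) * (a.factorial * (a + b) ^ b) := Nat.mul_le_mul_left _ (fact_add_le a b)
      _ ≤ (a + b + 1) * (a.factorial * (a + b + 1) ^ b) := by
          exact Nat.mul_le_mul_left _ (Nat.mul_le_mul_left _
            (Nat.pow_le_pow_left (Nat.le_succ _) _))
      _ = a.factorial * (a + (b+1)) ^ (b+1) := by ring

private lemma multinomial_upper (p : ℕ) : ∀ k, (p * k).factorial ≤ (k.factorial) ^ p * p ^ (p * k)
  | 0 => by simp
  | k + 1 => by
    have h1 : (p * (k+1)).factorial ≤ (p * k).factorial * (p * (k+1)) ^ p := by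
      have := fact_add_le (p * k) p
      rw [show p * k + p = p * (k + 1) by ring] at this
      exact this
    calc (p * (k+1)).factorial ≤ (p * k).factorial * (p * (k+1)) ^ p := h1
      _ ≤ ((k.factorial) ^ p * p ^ (p * k)) * (p * (k+1)) ^ p :=
          Nat.mul_le_mul_right _ (multinomial_upper p k)
      _ = ((k+1).factorial) ^ p * p ^ (p * (k+1)) := by
          rw [Nat.factorial_succ, mul_pow, mul_pow]; ring

private lemma blocks_lower (q : ℕ) : ∀ a,
    (q+1).factorial * ((q+1) ^ ((q+1) * a) * ((a.factorial) ^ q * (a+1).factorial)) ≤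
      ((q+1) * (a+1)).factorial
  | 0 => by simp
  | a + 1 => by
    have ih := blocks_lower q a
    have h1 : ((q+1) * (a+1)).factorial * ((q+1) * (a+1) + 1) ^ (q+1) ≤
        ((q+1) * (a+1+1)).factorial := by
      have := Nat.factorial_mul_pow_le_factorial (m := (q+1) * (a+1)) (n := q+1)
      rw [show (q+1) * (a+1) + (q+1) = (q+1) * (a+1+1) by ring] at this
      exact this
    have h2 : ((q+1) * (a+1)) ^ q * ((q+1) * (a+1) + q + 1) ≤ ((q+1) * (a+1) + 1) ^ (q+1) :=
      bern ((q+1) * (a+1)) q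
    have e : (q+1) ^ ((q+1) * (a+1)) = (q+1) ^ ((q+1) * a) * (q+1) ^ q * (q+1) := by
      rw [mul_assoc, ← pow_succ, ← pow_add, Nat.mul_succ]
    calc (q+1).factorial * ((q+1) ^ ((q+1) * (a+1)) * (((a+1).factorial) ^ q * (a+1+1).factorial))
        = ((q+1).factorial * ((q+1) ^ ((q+1) * a) * ((a.factorial) ^ q * (a+1).factorial))) *
            (((q+1) * (a+1)) ^ q * ((q+1) * (a+1) + q + 1)) := by
          rw [e, Nat.factorial_succ (a+1), Nat.factorial_succ a, mul_pow, mul_pow]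
          ring
      _ ≤ ((q+1) * (a+1)).factorial * (((q+1) * (a+1)) ^ q * ((q+1) * (a+1) + q + 1)) :=
          Nat.mul_le_mul_right _ ih
      _ ≤ ((q+1) * (a+1)).factorial * ((q+1) * (a+1) + 1) ^ (q+1) := Nat.mul_le_mul_left _ h2
      _ ≤ ((q+1) * (a+1+1)).factorial := h1

private lemma succ_le_fact {q : ℕ} (hq : 3 ≤ q) : q + 1 ≤ q.factorial := by
  induction q, hq using Nat.le_induction with
  | base => decide
  | succ q hq ih =>
    calc q + 1 + 1 ≤ (q + 1) * (q + 1) := by nlinarith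
      _ ≤ (q + 1) * q.factorial := Nat.mul_le_mul_left _ ih
      _ = (q+1).factorial := (Nat.factorial_succ q).symm

private lemma base_case {p : ℕ} (hp : 3 ≤ p) : p * p * p ^ (p * p) ≤ (p * p).factorial := by
  rcases eq_or_lt_of_le hp with h | h
  · subst h; decide
  · -- p ≥ 4
    obtain ⟨q, rfl⟩ : ∃ q, p = q + 1 := ⟨p - 1, by omega⟩
    have hq : 3 ≤ q := by omega
    have hb := blocks_lower q q
    have hfq : q + 1 ≤ q.factorial := succ_le_fact hq
    have e2 : ((q+1) : ℕ) ^ ((q+1) * (q+1)) = (q+1) ^ ((q+1) * q) * (q+1) ^ (q+1) := by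
      rw [← pow_add, Nat.mul_succ]
    have hpow : (q+1) ^ (q+1) ≤ (q.factorial) ^ (q+2) := by
      calc (q+1) ^ (q+1) ≤ q.factorial ^ (q+1) := Nat.pow_le_pow_left hfq _
        _ ≤ q.factorial ^ (q+2) := Nat.pow_le_pow_right q.factorial_pos (by omega)
    have h3 : (q+1) * (q+1) * (q+1) ^ (q+1) ≤
        (q+1).factorial * ((q.factorial) ^ q * (q+1).factorial) := by
      calc (q+1) * (q+1) * (q+1) ^ (q+1) ≤ (q+1) * (q+1) * (q.factorial) ^ (q+2) :=
            Nat.mul_le_mul_left _ hpow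
        _ = (q+1).factorial * ((q.factorial) ^ q * (q+1).factorial) := by
            rw [pow_add, Nat.factorial_succ]; ring
    calc (q+1) * (q+1) * (q+1) ^ ((q+1) * (q+1))
        = (q+1) ^ ((q+1) * q) * ((q+1) * (q+1) * (q+1) ^ (q+1)) := by rw [e2]; ring
      _ ≤ (q+1) ^ ((q+1) * q) * ((q+1).factorial * ((q.factorial) ^ q * (q+1).factorial)) :=
          Nat.mul_le_mul_left _ h3
      _ = (q+1).factorial * ((q+1) ^ ((q+1) * q) * ((q.factorial) ^ q * (q+1).factorial)) := by
          ring
      _ ≤ ((q+1) * (q+1)).factorial := hb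

private lemma fact_ge {p : ℕ} (hp : 3 ≤ p) (k : ℕ) (hk : p * p ≤ k) :
    k * p ^ k ≤ k.factorial := by
  induction k, hk using Nat.le_induction with
  | base => exact base_case hp
  | succ k hk ih =>
    have hkp : p ≤ k := le_trans (Nat.le_mul_of_pos_left p (by omega)) hk
    calc (k+1) * p ^ (k+1) = (k+1) * (p ^ k * p) := by rw [pow_succ]
      _ ≤ (k+1) * (p ^ k * k) := Nat.mul_le_mul_left _ (Nat.mul_le_mul_left _ hkp)
      _ = (k+1) * (k * p ^ k) := by ring
      _ ≤ (k+1) * k.factorial := Nat.mul_le_mul_left _ ih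
      _ = (k+1).factorial := (Nat.factorial_succ k).symm

private lemma main_nat {p k : ℕ} (hp : 3 ≤ p) (hk : p * p ≤ k) :
    2 * (p * k) ^ 2 * (p * k).factorial ≤ ((k.factorial) ^ p * p.factorial) ^ 2 := by
  have hk1 : 1 ≤ k := le_trans (by nlinarith) hk
  have h1 := multinomial_upper p k
  have h2 : k ^ p * p ^ (p * k) ≤ (k.factorial) ^ p := by
    have := Nat.pow_le_pow_left (fact_ge hp k hk) p
    rw [mul_pow, ← pow_mul, mul_comm k p] at this
    exact this
  have hf6 : 6 ≤ p.factorial := by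
    calc 6 = Nat.factorial 3 := rfl
      _ ≤ p.factorial := Nat.factorial_le hp
  have h3 : 2 * (p * k) ^ 2 ≤ k ^ p * p.factorial ^ 2 := by
    have hk3 : k ^ 3 ≤ k ^ p := Nat.pow_le_pow_right hk1 hp
    have hkk : 2 * (p * k) ^ 2 ≤ 36 * k ^ 3 := by nlinarith
    calc 2 * (p * k) ^ 2 ≤ 36 * k ^ 3 := hkk
      _ ≤ p.factorial ^ 2 * k ^ 3 := Nat.mul_le_mul_right _ (by nlinarith)
      _ ≤ p.factorial ^ 2 * k ^ p := Nat.mul_le_mul_left _ hk3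
      _ = k ^ p * p.factorial ^ 2 := by ring
  calc 2 * (p * k) ^ 2 * (p * k).factorial
      ≤ 2 * (p * k) ^ 2 * ((k.factorial) ^ p * p ^ (p * k)) := Nat.mul_le_mul_left _ h1
    _ = (2 * (p * k) ^ 2) * p ^ (p * k) * (k.factorial) ^ p := by ring
    _ ≤ (k ^ p * p.factorial ^ 2) * p ^ (p * k) * (k.factorial) ^ p := by
        exact Nat.mul_le_mul_right _ (Nat.mul_le_mul_right _ h3)
    _ = (k ^ p * p ^ (p * k)) * (p.factorial ^ 2 * (k.factorial) ^ p) := by ring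
    _ ≤ (k.factorial) ^ p * (p.factorial ^ 2 * (k.factorial) ^ p) := Nat.mul_le_mul_right _ h2
    _ = ((k.factorial) ^ p * p.factorial) ^ 2 := by ring

private lemma alpha_le (m : ℕ) : alpha m ≤ m + 1 := by
  have h : m.primeFactors ⊆ Finset.range (m + 1) := by
    intro q hq
    exact Finset.mem_range.mpr (Nat.lt_succ_of_le (Nat.le_of_mem_primeFactors hq))
  calc alpha m ≤ (Finset.range (m+1)).card := Finset.card_le_card h
    _ = m + 1 := Finset.card_range _

private lemma key2 {m n : ℕ} (hm : 2 ≤ m) (hn : 27 ≤ n) :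
    (1 + alpha m) * (2 ^ (m - 1) * n) ≤ 2 ^ m * n ^ m := by
  have h1 : 1 + alpha m ≤ m + 2 := by have := alpha_le m; omega
  have h2 : m ≤ 2 ^ (m - 1) := by
    have : m - 1 < 2 ^ (m - 1) := Nat.lt_two_pow_self
    omega
  have h3 : m + 2 ≤ 2 * n ^ (m - 1) := by
    have : (2:ℕ) ^ (m-1) ≤ n ^ (m-1) := Nat.pow_le_pow_left (by omega) _
    omega
  have hm1 : m - 1 + 1 = m := by omega
  calc (1 + alpha m) * (2 ^ (m - 1) * n) ≤ (2 * n ^ (m-1)) * (2 ^ (m - 1) * n) := by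
        exact Nat.mul_le_mul_right _ (le_trans h1 h3)
    _ = (2 * 2 ^ (m-1)) * (n ^ (m-1) * n) := by ring
    _ = 2 ^ m * n ^ m := by rw [← pow_succ', ← pow_succ, hm1]

/-- **Lemma 11 (1).** For `m ≥ 2` and `n` odd with smallest prime divisor `p`
satisfying `p³ ≤ n`, `(1 + α(m))·(n!/2)^(m/2) ≤ (1/(2^(m-1)·n))·(((n/p)!)^p·p!)^m`
(over the reals, the exponent `m/2` being a real exponent). -/
theorem diagonal_bound_odd (m : ℕ) (hm : 2 ≤ m) (n : ℕ) (hodd : Odd n)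
    (p : ℕ) (hp : p.Prime) (hpn : p ∣ n) (hmin : ∀ q : ℕ, q.Prime → q ∣ n → p ≤ q)
    (hp3 : p ^ 3 ≤ n) :
    (1 + (alpha m : ℝ)) * ((Nat.factorial n : ℝ) / 2) ^ ((m : ℝ) / 2) ≤
      (1 / ((2 : ℝ) ^ (m - 1) * n)) *
        (((Nat.factorial (n / p) : ℝ) ^ p * Nat.factorial p) ^ m) := by
  -- p is odd, hence p ≥ 3
  have hp3' : 3 ≤ p := by
    rcases hp.eq_two_or_odd with h | h
    · exfalso
      subst h
      obtain ⟨c, rfl⟩ := hpn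
      rw [Nat.odd_iff] at hodd
      omega
    · have := hp.two_le
      omega
  set k := n / p with hkdef
  have hn : n = p * k := by
    rw [hkdef, Nat.mul_div_cancel' hpn]
  have hk : p * p ≤ k := by
    have h : p * (p * p) ≤ p * k := by
      calc p * (p * p) = p ^ 3 := by ring
        _ ≤ n := hp3
        _ = p * k := hn
    exact Nat.le_of_mul_le_mul_left h (by omega)
  have hn27 : 27 ≤ n := by
    calc 27 = 3 ^ 3 := rfl
      _ ≤ p ^ 3 := Nat.pow_le_pow_left hp3' 3
      _ ≤ n := hp3
  have hnat := main_nat hp3' hk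
  rw [← hn] at hnat
  have hk2 := key2 hm hn27
  -- move to ℝ
  set A : ℝ := ((k.factorial : ℝ)) ^ p * (p.factorial : ℝ) with hA
  set F : ℝ := (n.factorial : ℝ) with hF
  have hnR : (0:ℝ) < n := by exact_mod_cast (by omega : 0 < n)
  have hApos : 0 < A := by positivity
  have hFpos : 0 < F := by
    rw [hF]; exact_mod_cast Nat.factorial_pos n
  have h5R : 2 * (n:ℝ)^2 * F ≤ A ^ 2 := by
    rw [hA, hF]
    exact_mod_cast hnat
  have step1 : F / 2 ≤ (A / (2 * n)) ^ 2 := by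
    rw [div_pow, div_le_div_iff₀ (by norm_num) (by positivity)]
    nlinarith [h5R]
  have step2 : (F / 2) ^ ((m:ℝ)/2) ≤ (A / (2 * n)) ^ m := by
    have hx : (0:ℝ) ≤ A / (2 * n) := by positivity
    calc (F / 2) ^ ((m:ℝ)/2) ≤ ((A / (2 * n)) ^ 2) ^ ((m:ℝ)/2) :=
          Real.rpow_le_rpow (by positivity) step1 (by positivity)
      _ = (A / (2 * n)) ^ m := by
          rw [← Real.rpow_natCast (A / (2 * n)) 2, ← Real.rpow_mul hx,
            ← Real.rpow_natCast (A / (2 * n)) m]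
          congr 1
          push_cast
          ring
  have hk2R : (1 + (alpha m : ℝ)) * ((2:ℝ) ^ (m-1) * n) ≤ (2 * n) ^ m := by
    have hc : ((1 + alpha m : ℕ) : ℝ) * (((2:ℕ) ^ (m-1) * n : ℕ) : ℝ) ≤
        (((2:ℕ)^m * n^m : ℕ) : ℝ) := by exact_mod_cast hk2
    push_cast at hc
    calc (1 + (alpha m : ℝ)) * ((2:ℝ) ^ (m-1) * n) ≤ (2:ℝ)^m * (n:ℝ)^m := hc
      _ = (2 * n) ^ m := (mul_pow 2 (n:ℝ) m).symm
  have halpha : (0:ℝ) ≤ 1 + (alpha m : ℝ) := by positivity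
  have step3 : (1 + (alpha m : ℝ)) * (A / (2 * n)) ^ m ≤ (1 / ((2:ℝ) ^ (m-1) * n)) * A ^ m := by
    rw [div_pow, mul_div_assoc', one_div_mul_eq_div,
      div_le_div_iff₀ (by positivity) (by positivity)]
    calc (1 + (alpha m : ℝ)) * A ^ m * ((2:ℝ) ^ (m-1) * n)
        = ((1 + (alpha m : ℝ)) * ((2:ℝ) ^ (m-1) * n)) * A ^ m := by ring
      _ ≤ (2 * n) ^ m * A ^ m := mul_le_mul_of_nonneg_right hk2R (by positivity)
      _ = A ^ m * (2 * n) ^ m := by ring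
  calc (1 + (alpha m : ℝ)) * (F / 2) ^ ((m:ℝ)/2)
      ≤ (1 + (alpha m : ℝ)) * (A / (2 * n)) ^ m := mul_le_mul_of_nonneg_left step2 halpha
    _ ≤ (1 / ((2:ℝ) ^ (m-1) * n)) * A ^ m := step3
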